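/- Let u : ℝ² → ℝ² be a smooth vector field and ψ : ℝ² → ℝ a smooth function satisfying -Δψ + u·∇ψ = 0 pointwise on ℝ², with ∫_{ℝ²} |∇ψ|² dx < ∞. Then ψ is constant. -/

import Mathlib

open MeasureTheory Metric Real

noncomputable section

abbrev E2 : Type := EuclideanSpace ℝ (Fin 2)

/-- Partial derivative `∂ᵢ f` of a scalar function on `ℝ²`. -/
def pd (f : E2 → ℝ) (i : Fin 2) (x : E2) : ℝ :=
  fderiv ℝ f x (EuclideanSpace.single i 1)

/-- Partial derivative `∂ᵢ uⱼ` of a vector field on `ℝ²`. -/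
def pdv (u : E2 → E2) (i j : Fin 2) (x : E2) : ℝ :=
  pd (fun y => u y j) i x

/-- Laplacian of a scalar function on `ℝ²`. -/
def lap (f : E2 → ℝ) (x : E2) : ℝ :=
  pd (pd f 0) 0 x + pd (pd f 1) 1 x

/-- `|∇f|²` for a scalar function. -/
def gradSq (f : E2 → ℝ) (x : E2) : ℝ := (pd f 0 x)^2 + (pd f 1 x)^2

/-- `|∇u|²` for a vector field: sum of squares of all first-order partials. -/
def gradSqV (u : E2 → E2) (x : E2) : ℝ := ∑ i, ∑ j, (pdv u i j x)^2

/-- Drift term `u·∇f`. -/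
def advect (u : E2 → E2) (f : E2 → ℝ) (x : E2) : ℝ :=
  u x 0 * pd f 0 x + u x 1 * pd f 1 x

end

noncomputable section
-- basic API
lemma contDiff_pd {f : E2 → ℝ} (hf : ContDiff ℝ (⊤:ℕ∞) f) (i : Fin 2) :
    ContDiff ℝ (⊤:ℕ∞) (pd f i) := by
  have h1 : ContDiff ℝ (⊤:ℕ∞) (fderiv ℝ f) := hf.fderiv_right (by exact_mod_cast le_top)
  exact (ContinuousLinearMap.apply ℝ ℝ (EuclideanSpace.single i 1)).contDiff.comp h1

lemma decomp (v : E2) : v = v 0 • EuclideanSpace.single (0:Fin 2) (1:ℝ)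
    + v 1 • EuclideanSpace.single (1:Fin 2) (1:ℝ) := by
  ext j
  fin_cases j <;> simp [EuclideanSpace.single_apply]

lemma fderiv_eval {f : E2 → ℝ} {x : E2} (hf : DifferentiableAt ℝ f x) (v : E2) :
    fderiv ℝ f x v = v 0 * pd f 0 x + v 1 * pd f 1 x := by
  conv_lhs => rw [decomp v]
  simp [pd, map_add, smul_eq_mul]

end

noncomputable section

lemma pd_congr_fun {f g : E2 → ℝ} (h : f = g) (i : Fin 2) (x : E2) : pd f i x = pd g i x := by rw [h]

lemma pd_add_mul {f g : E2 → ℝ} (hf : ContDiff ℝ (⊤:ℕ∞) f) (hg : ContDiff ℝ (⊤:ℕ∞) g)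
    (c : ℝ) (i : Fin 2) :
    pd (fun y => f y + c * g y) i = fun x => pd f i x + c * pd g i x := by
  funext x
  have hfd : DifferentiableAt ℝ f x := (hf.differentiable (by simp)).differentiableAt
  have hgd : DifferentiableAt ℝ g x := (hg.differentiable (by simp)).differentiableAt
  simp only [pd]
  rw [fderiv_fun_add hfd (hgd.const_mul c), fderiv_const_mul hgd]
  simp [smul_eq_mul]

lemma pd_neg (f : E2 → ℝ) (i : Fin 2) :
    pd (fun y => -(f y)) i = fun x => -(pd f i x) := by
  funext x
  simp [pd, fderiv_neg]

lemma pd_const_mul {g : E2 → ℝ} (hg : ContDiff ℝ (⊤:ℕ∞) g) (c : ℝ) (i : Fin 2) :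
    pd (fun y => c * g y) i = fun x => c * pd g i x := by
  funext x
  have hgd : DifferentiableAt ℝ g x := (hg.differentiable (by simp)).differentiableAt
  simp [pd, fderiv_const_mul hgd]

/-- the exponential weight -/
def expw (lam : ℝ) (x : E2) : ℝ := Real.exp (lam * x 0)

lemma expw_hasFDerivAt (lam : ℝ) (x : E2) :
    HasFDerivAt (expw lam) (Real.exp (lam * x 0) • (lam • (EuclideanSpace.proj (0 : Fin 2) : E2 →L[ℝ] ℝ))) x := by
  have h1 : HasFDerivAt (fun y : E2 => lam * y 0)
      (lam • (EuclideanSpace.proj (0 : Fin 2) : E2 →L[ℝ] ℝ)) x := by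
    exact ((EuclideanSpace.proj (0 : Fin 2) : E2 →L[ℝ] ℝ).hasFDerivAt).const_smul lam |>.congr_fderiv rfl
  exact (Real.hasDerivAt_exp (lam * x 0)).comp_hasFDerivAt x h1

lemma contDiff_expw (lam : ℝ) : ContDiff ℝ (⊤:ℕ∞) (expw lam) := by
  exact Real.contDiff_exp.comp ((contDiff_const).mul ((EuclideanSpace.proj (0:Fin 2) : E2 →L[ℝ] ℝ).contDiff))

lemma pd_expw (lam : ℝ) (i : Fin 2) :
    pd (expw lam) i = fun x => (if i = 0 then lam else 0) * expw lam x := by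
  funext x
  have h := (expw_hasFDerivAt lam x).fderiv
  simp only [pd, h]
  fin_cases i <;> simp [EuclideanSpace.single_apply, expw] <;> ring

lemma lap_expw (lam : ℝ) (x : E2) : lap (expw lam) x = lam ^ 2 * expw lam x := by
  simp only [lap]
  rw [show pd (expw lam) 0 = _ from pd_expw lam 0, show pd (expw lam) 1 = _ from pd_expw lam 1]
  rw [pd_const_mul (contDiff_expw lam), pd_const_mul (contDiff_expw lam)]
  simp only [pd_expw lam 0, pd_expw lam 1]
  simp
  ring

lemma advect_expw (u : E2 → E2) (lam : ℝ) (x : E2) :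
    advect u (expw lam) x = u x 0 * (lam * expw lam x) := by
  simp only [advect]
  simp only [pd_expw lam 0, pd_expw lam 1]
  simp

end

noncomputable section

/-- 1D second derivative test at a local max. -/
lemma second_deriv_nonpos_of_isLocalMax {f g : ℝ → ℝ} {c : ℝ}
    (hf : ∀ t, HasDerivAt f (g t) t) (hg : HasDerivAt g c 0)
    (hmax : IsLocalMax f 0) : c ≤ 0 := by
  by_contra hc
  push_neg at hc
  have hg0 : g 0 = 0 := by
    have := hmax.deriv_eq_zero
    rwa [(hf 0).deriv] at this
  -- slope of g at 0 tends to c > 0, so g > 0 on a right neighborhood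
  have hslope : Filter.Tendsto (fun t => g t / t) (nhdsWithin 0 (Set.Ioi 0)) (nhds c) := by
    have h := hg.hasDerivWithinAt (s := Set.Ioi (0:ℝ))
    have := (hasDerivWithinAt_iff_tendsto_slope.mp h)
    have h2 : Set.Ioi (0:ℝ) \ {0} = Set.Ioi 0 := by
      ext t
      simp only [Set.mem_diff, Set.mem_Ioi, Set.mem_singleton_iff]
      exact ⟨fun h => h.1, fun h => ⟨h, ne_of_gt h⟩⟩
    rw [h2] at this
    refine this.congr (fun t => ?_)
    rw [slope_def_field, hg0]
    simp [div_eq_inv_mul]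
  have hpos : ∀ᶠ t in nhdsWithin 0 (Set.Ioi 0), 0 < g t / t := by
    apply hslope.eventually_const_lt
    exact hc
  rw [eventually_nhdsWithin_iff] at hpos
  rw [Metric.eventually_nhds_iff] at hpos
  obtain ⟨δ, hδ, hδpos⟩ := hpos
  -- f is strictly monotone on [0, δ/2]
  have hmono : StrictMonoOn f (Set.Icc 0 (δ/2)) := by
    apply strictMonoOn_of_deriv_pos (convex_Icc _ _)
    · exact Continuous.continuousOn (by
        have : Differentiable ℝ f := fun t => (hf t).differentiableAt
        exact this.continuous)
    · intro t ht
      rw [interior_Icc] at ht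
      rw [(hf t).deriv]
      have h1 : 0 < g t / t := by
        apply hδpos (y := t)
        · simp only [Real.dist_eq, sub_zero]
          rw [abs_of_pos ht.1]; linarith [ht.2, hδ]
        · exact ht.1
      have := mul_pos h1 ht.1
      rwa [div_mul_cancel₀] at this
      exact ne_of_gt ht.1
  -- contradiction with local max
  obtain ⟨δ', hδ', hmaxδ⟩ := Metric.eventually_nhds_iff.mp hmax
  set t := min (δ/2) (δ'/2) with ht
  have htpos : 0 < t := by positivity
  have h1 : f 0 < f t := by
    apply hmono (Set.left_mem_Icc.mpr (by positivity)) ?_ htpos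
    constructor
    · linarith
    · exact min_le_left _ _
  have h2 : f t ≤ f 0 := by
    apply hmaxδ
    simp only [Real.dist_eq, sub_zero]
    rw [abs_of_pos htpos]
    calc t ≤ δ'/2 := min_le_right _ _
    _ < δ' := by linarith
  linarith

/-- directional 2nd derivative at an interior max is ≤ 0. -/
lemma pd_pd_nonpos_of_isLocalMax {φ : E2 → ℝ} (hφ : ContDiff ℝ (⊤:ℕ∞) φ)
    {x₀ : E2} (h : IsLocalMax φ x₀) (i : Fin 2) :
    pd (pd φ i) i x₀ ≤ 0 := by
  set e : E2 := EuclideanSpace.single i 1 with he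
  set L : ℝ → E2 := fun t => x₀ + t • e with hL
  have hLc : Continuous L := by fun_prop
  have hL0 : L 0 = x₀ := by simp [hL]
  have hmax : IsLocalMax (φ ∘ L) 0 := by
    rw [← hL0] at h
    exact h.comp_continuous hLc.continuousAt
  have hLd : ∀ t : ℝ, HasDerivAt L e t := by
    intro t
    simpa [hL] using ((hasDerivAt_id t).smul_const e).const_add x₀
  have hfd : ∀ t, HasDerivAt (φ ∘ L) (pd φ i (L t)) t := by
    intro t
    have h1 : HasFDerivAt φ (fderiv ℝ φ (L t)) (L t) :=
      ((hφ.differentiable (by simp)) (L t)).hasFDerivAt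
    exact h1.comp_hasDerivAt t (hLd t)
  have hgd : HasDerivAt (fun t => pd φ i (L t)) (pd (pd φ i) i x₀) 0 := by
    have h1 : HasFDerivAt (pd φ i) (fderiv ℝ (pd φ i) x₀) x₀ :=
      (((contDiff_pd hφ i).differentiable (by simp)) x₀).hasFDerivAt
    rw [← hL0] at h1
    have h2 := h1.comp_hasDerivAt 0 (hLd 0)
    rw [hL0] at h2
    exact h2
  exact second_deriv_nonpos_of_isLocalMax hfd hgd hmax

end

noncomputable section

lemma coord_le_norm (y : E2) (i : Fin 2) : |y i| ≤ ‖y‖ := by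
  rw [EuclideanSpace.norm_eq]
  rw [← Real.sqrt_sq_eq_abs]
  apply Real.sqrt_le_sqrt
  simp only [Real.norm_eq_abs, sq_abs]
  rw [show (y i ^ 2) = ∑ j ∈ {i}, y j ^ 2 by simp]
  apply Finset.sum_le_sum_of_subset_of_nonneg (Finset.subset_univ _)
  intros; positivity

lemma lap_add_mul {f g : E2 → ℝ} (hf : ContDiff ℝ (⊤:ℕ∞) f) (hg : ContDiff ℝ (⊤:ℕ∞) g)
    (c : ℝ) (x : E2) :
    lap (fun y => f y + c * g y) x = lap f x + c * lap g x := by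
  simp only [lap]
  rw [pd_congr_fun (pd_add_mul hf hg c 0) 0 x, pd_congr_fun (pd_add_mul hf hg c 1) 1 x]
  rw [show (fun x => pd f 0 x + c * pd g 0 x) = (fun x => pd f 0 x + c * pd g 0 x) from rfl]
  rw [pd_add_mul (contDiff_pd hf 0) (contDiff_pd hg 0) c 0,
      pd_add_mul (contDiff_pd hf 1) (contDiff_pd hg 1) c 1]
  ring

lemma advect_add_mul (u : E2 → E2) {f g : E2 → ℝ} (hf : ContDiff ℝ (⊤:ℕ∞) f)
    (hg : ContDiff ℝ (⊤:ℕ∞) g) (c : ℝ) (x : E2) :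
    advect u (fun y => f y + c * g y) x = advect u f x + c * advect u g x := by
  simp only [advect]
  rw [congrFun (pd_add_mul hf hg c 0) x, congrFun (pd_add_mul hf hg c 1) x]
  ring

/-- Weak maximum principle on closed balls for `-Δψ + u·∇ψ = 0`. -/
lemma wmp (u : E2 → E2) (ψ : E2 → ℝ) (hu : Continuous fun y => u y 0)
    (hψ : ContDiff ℝ (⊤:ℕ∞) ψ)
    (heq : ∀ x, -(lap ψ x) + advect u ψ x = 0) {r : ℝ} (hr : 0 < r)
    {x p : E2} (hx : x ∈ closedBall (0:E2) r) (hp : IsMaxOn ψ (sphere (0:E2) r) p) :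
    ψ x ≤ ψ p := by
  -- choose lam bigger than u · 0 on the ball
  obtain ⟨q, hqmem, hq⟩ := (isCompact_closedBall (0:E2) r).exists_isMaxOn
    ⟨0, mem_closedBall_self hr.le⟩ hu.continuousOn
  set lam : ℝ := max (u q 0) 0 + 1 with hlam_def
  have hlam : 0 < lam := by positivity
  have hlamgt : ∀ y ∈ closedBall (0:E2) r, u y 0 < lam := by
    intro y hy
    have := hq hy
    simp only [Set.mem_setOf_eq] at this
    have h2 : u q 0 ≤ max (u q 0) 0 := le_max_left _ _
    linarith
  set K : ℝ := Real.exp (lam * r) with hK_def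
  have hKpos : 0 < K := Real.exp_pos _
  have hEb : ∀ y ∈ closedBall (0:E2) r, expw lam y ≤ K := by
    intro y hy
    apply Real.exp_le_exp.mpr
    apply mul_le_mul_of_nonneg_left _ hlam.le
    calc y 0 ≤ |y 0| := le_abs_self _
    _ ≤ ‖y‖ := coord_le_norm y 0
    _ ≤ r := by rwa [mem_closedBall, dist_zero_right] at hy
  -- ε-perturbation argument
  have key : ∀ ε > (0:ℝ), ψ x ≤ ψ p + ε * K := by
    intro ε hε
    set φ : E2 → ℝ := fun y => ψ y + ε * expw lam y with hφ_def
    have hφc : ContDiff ℝ (⊤:ℕ∞) φ := hψ.add (contDiff_const.mul (contDiff_expw lam))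
    obtain ⟨x₀, hx₀cb, hmax⟩ := (isCompact_closedBall (0:E2) r).exists_isMaxOn
      ⟨0, mem_closedBall_self hr.le⟩ (hφc.continuous).continuousOn
    by_cases hball : x₀ ∈ ball (0:E2) r
    · exfalso
      have hloc : IsLocalMax φ x₀ :=
        hmax.isLocalMax (Filter.mem_of_superset (isOpen_ball.mem_nhds hball)
          ball_subset_closedBall)
      have hgrad := hloc.fderiv_eq_zero
      have hpd : ∀ i, pd φ i x₀ = 0 := by intro i; simp [pd, hgrad]
      have hsec : lap φ x₀ ≤ 0 := by
        have h0 := pd_pd_nonpos_of_isLocalMax hφc hloc 0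
        have h1 := pd_pd_nonpos_of_isLocalMax hφc hloc 1
        simp only [lap]; linarith
      have hadv : advect u φ x₀ = 0 := by
        simp only [advect, hpd 0, hpd 1]; ring
      have hid : -(lap φ x₀) + advect u φ x₀
          = ε * (lam * expw lam x₀ * (u x₀ 0 - lam)) := by
        rw [show φ = (fun y => ψ y + ε * expw lam y) from rfl]
        rw [lap_add_mul hψ (contDiff_expw lam) ε, advect_add_mul u hψ (contDiff_expw lam) ε]
        rw [lap_expw, advect_expw]
        linear_combination heq x₀
      have hneg : ε * (lam * expw lam x₀ * (u x₀ 0 - lam)) < 0 := by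
        have h4 := hlamgt x₀ hx₀cb
        have h5 : 0 < expw lam x₀ := Real.exp_pos _
        have : u x₀ 0 - lam < 0 := by linarith
        have h6 : lam * expw lam x₀ > 0 := by positivity
        exact mul_neg_of_pos_of_neg hε (mul_neg_of_pos_of_neg h6 this)
      have h0 : 0 ≤ -(lap φ x₀) + advect u φ x₀ := by rw [hadv]; linarith
      rw [hid] at h0
      linarith
    · -- boundary case
      have hsph : x₀ ∈ sphere (0:E2) r := by
        rw [mem_sphere, dist_zero_right]
        rw [mem_closedBall, dist_zero_right] at hx₀cb
        rw [mem_ball, dist_zero_right] at hball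
        linarith [lt_or_ge ‖x₀‖ r |>.resolve_left hball]
      have h7 : φ x ≤ φ x₀ := hmax hx
      have h8 : ψ x₀ ≤ ψ p := hp hsph
      have h9 : 0 < expw lam x := Real.exp_pos _
      have h10 : expw lam x₀ ≤ K := hEb x₀ hx₀cb
      simp only [hφ_def] at h7
      nlinarith
  -- conclude
  by_contra hcon
  push_neg at hcon
  have hε : 0 < (ψ x - ψ p) / (2 * K) := div_pos (by linarith) (by positivity)
  have h1 := key _ hε
  have h2 : (ψ x - ψ p) / (2 * K) * K = (ψ x - ψ p) / 2 := by
    field_simp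
  rw [h2] at h1
  linarith

end

noncomputable section
open intervalIntegral

def ee (i : Fin 2) : E2 := EuclideanSpace.single i 1

/-- circle parametrization -/
def σc (r θ : ℝ) : E2 := (r * Real.cos θ) • ee 0 + (r * Real.sin θ) • ee 1

lemma σc_apply0 (r θ : ℝ) : σc r θ 0 = r * Real.cos θ := by
  simp [σc, ee, PiLp.add_apply, PiLp.smul_apply, EuclideanSpace.single_apply]

lemma σc_apply1 (r θ : ℝ) : σc r θ 1 = r * Real.sin θ := by
  simp [σc, ee, PiLp.add_apply, PiLp.smul_apply, EuclideanSpace.single_apply]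

lemma norm_σc (r θ : ℝ) (hr : 0 ≤ r) : ‖σc r θ‖ = r := by
  rw [EuclideanSpace.norm_eq]
  rw [Fin.sum_univ_two, σc_apply0, σc_apply1]
  simp only [Real.norm_eq_abs, sq_abs]
  rw [show (r * Real.cos θ)^2 + (r * Real.sin θ)^2 = r^2 by
    have := Real.sin_sq_add_cos_sq θ; nlinarith]
  exact Real.sqrt_sq hr

lemma σc_hasDerivAt (r θ : ℝ) :
    HasDerivAt (fun t => σc r t) ((-(r * Real.sin θ)) • ee 0 + (r * Real.cos θ) • ee 1) θ := by
  apply HasDerivAt.add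
  · have h := ((Real.hasDerivAt_cos θ).const_mul r).smul_const (ee 0)
    simpa [mul_comm, mul_neg] using h
  · have h := ((Real.hasDerivAt_sin θ).const_mul r).smul_const (ee 1)
    simpa using h

lemma deriv_coords (v : E2) (a b : ℝ) (h0 : v 0 = a) (h1 : v 1 = b) {f : E2 → ℝ} {x : E2}
    (hf : DifferentiableAt ℝ f x) : fderiv ℝ f x v = a * pd f 0 x + b * pd f 1 x := by
  rw [fderiv_eval hf v, h0, h1]

/-- Cauchy-Schwarz for interval integrals of continuous functions -/
lemma cs_interval {h : ℝ → ℝ} {a b : ℝ} (hab : a ≤ b) (hc : Continuous h) :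
    (∫ t in a..b, h t)^2 ≤ (b - a) * ∫ t in a..b, (h t)^2 := by
  rcases eq_or_lt_of_le hab with rfl | hlt
  · simp
  set I := ∫ t in a..b, h t with hI
  set m := I / (b - a) with hm_def
  have hint : IntervalIntegrable h volume a b := hc.intervalIntegrable a b
  have hint2 : IntervalIntegrable (fun t => (h t)^2) volume a b :=
    (hc.pow 2).intervalIntegrable a b
  have h0 : 0 ≤ ∫ t in a..b, (h t - m)^2 :=
    intervalIntegral.integral_nonneg hab (fun t _ => by positivity)
  have hexp : ∫ t in a..b, (h t - m)^2
      = (∫ t in a..b, (h t)^2) - 2*m*I + m^2*(b-a) := by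
    have heq : ∀ t, (h t - m)^2 = (h t)^2 - 2*m* h t + m^2 := fun t => by ring
    simp_rw [heq]
    rw [intervalIntegral.integral_add (hint2.sub (hint.const_mul (2*m)))
        intervalIntegrable_const,
      intervalIntegral.integral_sub hint2 (hint.const_mul (2*m)),
      intervalIntegral.integral_const_mul, intervalIntegral.integral_const]
    simp only [smul_eq_mul]
    ring
  have hm : m * (b - a) = I := div_mul_cancel₀ _ (by linarith)
  rw [hexp] at h0
  nlinarith [h0, hm, sub_pos.mpr hlt]

/-- oscillation on a circle, squared, is bounded via the angular Dirichlet energy -/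
lemma osc_sq_le {ψ : E2 → ℝ} (hψ : ContDiff ℝ (⊤:ℕ∞) ψ) {r : ℝ} (hr : 0 < r) {a b : ℝ}
    (ha : -π ≤ a) (hab : a ≤ b) (hb : b ≤ π) :
    (ψ (σc r b) - ψ (σc r a))^2
      ≤ (2*π) * ∫ θ in Set.Ioo (-π) π, r^2 * gradSq ψ (σc r θ) := by
  have hdiff : Differentiable ℝ ψ := hψ.differentiable (by simp)
  set f' : ℝ → ℝ := fun θ => (-(r * Real.sin θ)) * pd ψ 0 (σc r θ)
      + (r * Real.cos θ) * pd ψ 1 (σc r θ) with hf'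
  have hfd : ∀ θ, HasDerivAt (fun t => ψ (σc r t)) (f' θ) θ := by
    intro θ
    have h1 := (hdiff (σc r θ)).hasFDerivAt.comp_hasDerivAt θ (σc_hasDerivAt r θ)
    have h2 : fderiv ℝ ψ (σc r θ) ((-(r * Real.sin θ)) • ee 0 + (r * Real.cos θ) • ee 1)
        = (-(r * Real.sin θ)) * pd ψ 0 (σc r θ) + (r * Real.cos θ) * pd ψ 1 (σc r θ) := by
      apply deriv_coords _ _ _ _ _ (hdiff _)
      · simp [ee, PiLp.add_apply, PiLp.smul_apply, EuclideanSpace.single_apply]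
      · simp [ee, PiLp.add_apply, PiLp.smul_apply, EuclideanSpace.single_apply]
    rw [h2] at h1
    exact h1
  have hσc : Continuous fun θ => σc r θ := by
    apply Continuous.add <;> fun_prop
  have hf'c : Continuous f' := by
    have h0 := (contDiff_pd hψ 0).continuous
    have h1 := (contDiff_pd hψ 1).continuous
    fun_prop
  -- FTC
  have hftc : ψ (σc r b) - ψ (σc r a) = ∫ θ in a..b, f' θ := by
    rw [intervalIntegral.integral_eq_sub_of_hasDerivAt (fun t _ => hfd t)
      (hf'c.intervalIntegrable a b)]
  -- pointwise bound
  have hptw : ∀ θ, (f' θ)^2 ≤ r^2 * gradSq ψ (σc r θ) := by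
    intro θ
    simp only [hf', gradSq]
    have hcs := Real.sin_sq_add_cos_sq θ
    nlinarith [sq_nonneg ((-(r * Real.sin θ)) * pd ψ 1 (σc r θ)
        - (r * Real.cos θ) * pd ψ 0 (σc r θ))]
  -- chain of inequalities
  have hGc : Continuous fun θ => r^2 * gradSq ψ (σc r θ) := by
    have h0 := (contDiff_pd hψ 0).continuous
    have h1 := (contDiff_pd hψ 1).continuous
    simp only [gradSq]
    fun_prop
  have h1 : (ψ (σc r b) - ψ (σc r a))^2 ≤ (b - a) * ∫ θ in a..b, (f' θ)^2 := by
    rw [hftc]; exact cs_interval hab hf'c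
  have h2 : ∫ θ in a..b, (f' θ)^2 ≤ ∫ θ in a..b, r^2 * gradSq ψ (σc r θ) := by
    apply intervalIntegral.integral_mono_on hab ((hf'c.pow 2).intervalIntegrable a b)
      (hGc.intervalIntegrable a b)
    exact fun t _ => hptw t
  have h3 : ∫ θ in a..b, r^2 * gradSq ψ (σc r θ)
      ≤ ∫ θ in Set.Ioo (-π) π, r^2 * gradSq ψ (σc r θ) := by
    rw [intervalIntegral.integral_of_le hab]
    apply setIntegral_mono_set
      (hGc.continuousOn.integrableOn_compact isCompact_Icc |>.mono_set Set.Ioo_subset_Icc_self)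
    · filter_upwards with θ
      have := sq_nonneg (pd ψ 0 (σc r θ))
      have := sq_nonneg (pd ψ 1 (σc r θ))
      simp only [gradSq]
      positivity
    · rw [MeasureTheory.ae_le_set]
      refine measure_mono_null (t := {π}) ?_ (measure_singleton π)
      intro θ hθ
      simp only [Set.mem_diff, Set.mem_Ioc, Set.mem_Ioo, not_and_or, not_lt] at hθ
      obtain ⟨⟨hθ1, hθ2⟩, h⟩ := hθ
      rcases h with h | h
      · exfalso; linarith
      · simp only [Set.mem_singleton_iff]; linarith
  have hnn : 0 ≤ ∫ θ in a..b, (f' θ)^2 :=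
    intervalIntegral.integral_nonneg hab (fun t _ => sq_nonneg _)
  have hba : b - a ≤ 2*π := by
    have := Real.pi_pos; linarith
  have hIoo : 0 ≤ ∫ θ in Set.Ioo (-π) π, r^2 * gradSq ψ (σc r θ) := by
    apply setIntegral_nonneg measurableSet_Ioo
    intro θ _
    have := sq_nonneg (pd ψ 0 (σc r θ)); have := sq_nonneg (pd ψ 1 (σc r θ))
    simp only [gradSq]; positivity
  calc (ψ (σc r b) - ψ (σc r a))^2 ≤ (b - a) * ∫ θ in a..b, (f' θ)^2 := h1
    _ ≤ (b - a) * ∫ θ in Set.Ioo (-π) π, r^2 * gradSq ψ (σc r θ) := by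
        apply mul_le_mul_of_nonneg_left (le_trans h2 h3) (by linarith)
    _ ≤ (2*π) * ∫ θ in Set.Ioo (-π) π, r^2 * gradSq ψ (σc r θ) :=
        mul_le_mul_of_nonneg_right hba hIoo

end

noncomputable section
open Real

/-- measurable equiv from ℝ×ℝ to E2 -/
def mE2 : (ℝ × ℝ) ≃ᵐ E2 :=
  (MeasurableEquiv.finTwoArrow (α := ℝ)).symm.trans
    (MeasurableEquiv.toLp 2 (Fin 2 → ℝ))

lemma mE2_apply (p : ℝ × ℝ) : mE2 p = p.1 • ee 0 + p.2 • ee 1 := by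
  ext j
  fin_cases j <;>
    simp [mE2, MeasurableEquiv.finTwoArrow, MeasurableEquiv.coe_toLp, ee,
      PiLp.add_apply, PiLp.smul_apply, EuclideanSpace.single_apply,
      Matrix.cons_val_zero, Matrix.cons_val_one]

lemma mE2_measurePreserving : MeasurePreserving mE2 volume volume :=
  ((EuclideanSpace.volume_preserving_symm_measurableEquiv_toLp (Fin 2)).symm).comp
    ((volume_preserving_finTwoArrow ℝ).symm)

lemma mE2_polar (r θ : ℝ) : mE2 (polarCoord.symm (r, θ)) = σc r θ := by
  rw [polarCoord_symm_apply, mE2_apply]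
  rfl

lemma norm_mE2 (p : ℝ × ℝ) : ‖mE2 p‖ = Real.sqrt (p.1^2 + p.2^2) := by
  rw [mE2_apply, EuclideanSpace.norm_eq, Fin.sum_univ_two]
  have h0 : (p.1 • ee 0 + p.2 • ee 1 : E2) 0 = p.1 := by
    simp [ee, PiLp.add_apply, PiLp.smul_apply, EuclideanSpace.single_apply]
  have h1 : (p.1 • ee 0 + p.2 • ee 1 : E2) 1 = p.2 := by
    simp [ee, PiLp.add_apply, PiLp.smul_apply, EuclideanSpace.single_apply]
  rw [h0, h1]
  simp [Real.norm_eq_abs, sq_abs]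

/-- Good radius selection via polar coordinates. -/
lemma exists_good_radius {G : E2 → ℝ} (hGc : Continuous G) (hGnn : ∀ x, 0 ≤ G x)
    {R : ℝ} (hR : 0 < R) :
    ∃ r ∈ Set.Ioo R (2*R),
      (∫ θ in Set.Ioo (-π) π, G (σc r θ)) * R^2
        ≤ 2 * ∫ x in (ball (0:E2) (2*R) \ closedBall 0 R), G x := by
  set Ann : Set E2 := ball (0:E2) (2*R) \ closedBall 0 R with hAnn
  set T : Set (ℝ × ℝ) := (Set.Ioo R (2*R)) ×ˢ (Set.Ioo (-π) π) with hT
  set F : ℝ × ℝ → ℝ := fun p => p.1 * G (σc p.1 p.2) with hF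
  set F' : ℝ × ℝ → ℝ := fun p => G (σc p.1 p.2) with hF'
  set g : ℝ → ℝ := fun r => ∫ θ in Set.Ioo (-π) π, G (σc r θ) with hg
  set I : ℝ := ∫ x in Ann, G x with hI
  have hσcont : Continuous (fun p : ℝ × ℝ => σc p.1 p.2) := by
    simp only [σc]; fun_prop
  have hFc : Continuous F := by fun_prop
  have hF'c : Continuous F' := by fun_prop
  -- Step 1: I = ∫ p in T, F p
  have step1 : I = ∫ p in T, F p := by
    have hmeasAnn : MeasurableSet Ann := measurableSet_ball.diff measurableSet_closedBall
    set A' : Set (ℝ×ℝ) := mE2 ⁻¹' Ann with hA'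
    have hmeasA' : MeasurableSet A' := mE2.measurable hmeasAnn
    have hIeq : I = ∫ p in A', G (mE2 p) :=
      (mE2_measurePreserving.setIntegral_preimage_emb mE2.measurableEmbedding G Ann).symm
    have hpolar := integral_comp_polarCoord_symm (A'.indicator (fun q => G (mE2 q)))
    rw [integral_indicator hmeasA'] at hpolar
    have hcong : ∀ p ∈ polarCoord.target,
        p.1 • (A'.indicator (fun q => G (mE2 q))) (polarCoord.symm p) = T.indicator F p := by
      rintro ⟨r, θ⟩ hp
      rw [polarCoord_target] at hp
      obtain ⟨hr, hθ⟩ := hp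
      simp only [Set.mem_Ioi] at hr
      have hmem_iff : polarCoord.symm (r, θ) ∈ A' ↔ r ∈ Set.Ioo R (2*R) := by
        rw [hA', Set.mem_preimage, mE2_polar, hAnn, Set.mem_diff, mem_ball,
          mem_closedBall, dist_zero_right, norm_σc r θ hr.le]
        simp only [Set.mem_Ioo, not_le]
        tauto
      by_cases hmem : r ∈ Set.Ioo R (2*R)
      · rw [Set.indicator_of_mem (hmem_iff.mpr hmem),
          Set.indicator_of_mem (by exact Set.mem_prod.mpr ⟨hmem, hθ⟩)]
        rw [mE2_polar]
        simp [hF]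
      · rw [Set.indicator_of_notMem (fun h => hmem (hmem_iff.mp h)),
          Set.indicator_of_notMem (by
            intro h
            exact hmem (Set.mem_prod.mp h).1)]
        simp
    have hTmeas : MeasurableSet T := by
      rw [hT]; exact measurableSet_Ioo.prod measurableSet_Ioo
    have hTsub' : T ⊆ polarCoord.target := by
      rw [hT, polarCoord_target]
      apply Set.prod_mono_left
      intro t ht
      simp only [Set.mem_Ioi]
      exact lt_trans hR ht.1
    calc I = ∫ p in A', G (mE2 p) := hIeq
      _ = ∫ p in polarCoord.target,
            p.1 • (A'.indicator (fun q => G (mE2 q))) (polarCoord.symm p) := hpolar.symm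
      _ = ∫ p in polarCoord.target, T.indicator F p :=
            setIntegral_congr_fun polarCoord.open_target.measurableSet hcong
      _ = ∫ p in polarCoord.target ∩ T, F p := setIntegral_indicator hTmeas
      _ = ∫ p in T, F p := by rw [Set.inter_eq_self_of_subset_right hTsub']
  -- Step 2: Fubini
  have hTsub : T ⊆ Set.Icc R (2*R) ×ˢ Set.Icc (-π) π :=
    Set.prod_mono Set.Ioo_subset_Icc_self Set.Ioo_subset_Icc_self
  have hFint : IntegrableOn F T := by
    apply (hFc.continuousOn.integrableOn_compact (isCompact_Icc.prod isCompact_Icc)).mono_set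
      hTsub
  have hF'int : IntegrableOn F' T := by
    apply (hF'c.continuousOn.integrableOn_compact (isCompact_Icc.prod isCompact_Icc)).mono_set
      hTsub
  have hprodT : (volume : Measure (ℝ×ℝ)).restrict T
      = ((volume : Measure ℝ).restrict (Set.Ioo R (2*R))).prod
        ((volume : Measure ℝ).restrict (Set.Ioo (-π) π)) := by
    rw [hT, Measure.volume_eq_prod, Measure.prod_restrict]
  have step2 : I = ∫ r in Set.Ioo R (2*R), r * g r := by
    rw [step1, hT]
    rw [Measure.volume_eq_prod] at hFint ⊢
    rw [MeasureTheory.setIntegral_prod _ hFint]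
    apply setIntegral_congr_fun measurableSet_Ioo
    intro r _
    rw [hg]
    simp only [hF]
    rw [MeasureTheory.integral_const_mul]
  have hgint : IntegrableOn g (Set.Ioo R (2*R)) := by
    have h1 := hF'int
    rw [IntegrableOn, hprodT] at h1
    exact h1.integral_prod_left
  have hrgint : IntegrableOn (fun r => r * g r) (Set.Ioo R (2*R)) := by
    have h1 := hFint
    rw [IntegrableOn, hprodT] at h1
    have h2 := h1.integral_prod_left
    apply h2.congr
    filter_upwards with r
    simp only [hF]
    rw [MeasureTheory.integral_const_mul]
  have hgnn : ∀ r, 0 ≤ g r := by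
    intro r
    apply setIntegral_nonneg measurableSet_Ioo
    exact fun θ _ => hGnn _
  -- ∫ g ≤ I / R
  have step3 : R * ∫ r in Set.Ioo R (2*R), g r ≤ I := by
    rw [step2, ← MeasureTheory.integral_const_mul]

    apply setIntegral_mono_on (hgint.const_mul R) hrgint measurableSet_Ioo
    intro r hr
    exact mul_le_mul_of_nonneg_right hr.1.le (hgnn r)
  have hInn : 0 ≤ I := by
    have h4 : 0 ≤ ∫ r in Set.Ioo R (2*R), g r :=
      setIntegral_nonneg measurableSet_Ioo (fun r _ => hgnn r)
    nlinarith [step3, mul_nonneg hR.le h4]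
  -- selection
  by_contra hcon
  push_neg at hcon
  have hptw : ∀ r ∈ Set.Ioo R (2*R), 2 * I / R^2 < g r := by
    intro r hr
    have := hcon r hr
    rw [div_lt_iff₀ (by positivity)]
    linarith [this]
  have hvol : (volume (Set.Ioo R (2*R))).toReal = R := by
    rw [Real.volume_Ioo, ENNReal.toReal_ofReal (by linarith)]
    ring
  have step4 : (2 * I / R^2) * R ≤ ∫ r in Set.Ioo R (2*R), g r := by
    have := setIntegral_mono_on (integrableOn_const
        (by rw [Real.volume_Ioo]; exact ENNReal.ofReal_ne_top)) hgint
      measurableSet_Ioo (fun r hr => (hptw r hr).le)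
    rw [setIntegral_const, smul_eq_mul, measureReal_def, hvol] at this
    linarith [this]
  -- combine: 2I/R ≤ I/R hence I = 0
  have hI0 : I = 0 := by
    have hdiv : 2*I/R^2*R*R = 2*I := by field_simp
    nlinarith [step3, mul_le_mul_of_nonneg_left step4 hR.le, hdiv, hInn]
  -- but then ∫ g = 0 while g > 0 on Ioo
  have hgzero : ∫ r in Set.Ioo R (2*R), g r = 0 := by
    have h4 : 0 ≤ ∫ r in Set.Ioo R (2*R), g r :=
      setIntegral_nonneg measurableSet_Ioo (fun r _ => hgnn r)
    nlinarith [step3]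
  have hae : g =ᵐ[volume.restrict (Set.Ioo R (2*R))] 0 := by
    rw [← MeasureTheory.integral_eq_zero_iff_of_nonneg_ae
      (Filter.Eventually.of_forall (fun r => hgnn r)) hgint]
    exact hgzero
  have hne : (volume.restrict (Set.Ioo R (2*R))) ≠ 0 := by
    rw [← Measure.measure_univ_eq_zero |>.ne]
    rw [Measure.restrict_apply_univ, Real.volume_Ioo]
    simp only [ne_eq, ENNReal.ofReal_eq_zero, not_le]
    linarith
  haveI : Filter.NeBot (ae (volume.restrict (Set.Ioo R (2*R)))) := ae_neBot.mpr hne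
  have hfreq := hae.and ((ae_restrict_iff' measurableSet_Ioo).mpr
    (Filter.Eventually.of_forall (fun r (hr : r ∈ Set.Ioo R (2*R)) => hptw r hr)))
  obtain ⟨r, hr1, hr2⟩ := hfreq.exists
  rw [hr1, hI0] at hr2
  simp at hr2
end

noncomputable section
open Real

lemma lap_neg {f : E2 → ℝ} (x : E2) : lap (fun y => -(f y)) x = -(lap f x) := by
  simp only [lap]
  rw [pd_congr_fun (pd_neg f 0) 0 x, pd_congr_fun (pd_neg f 1) 1 x,
    congrFun (pd_neg (pd f 0) 0) x, congrFun (pd_neg (pd f 1) 1) x]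
  ring

lemma advect_neg (u : E2 → E2) {f : E2 → ℝ} (x : E2) :
    advect u (fun y => -(f y)) x = -(advect u f x) := by
  simp only [advect]
  rw [congrFun (pd_neg f 0) x, congrFun (pd_neg f 1) x]
  ring

lemma gradSq_neg {f : E2 → ℝ} (x : E2) : gradSq (fun y => -(f y)) x = gradSq f x := by
  simp only [gradSq]
  rw [congrFun (pd_neg f 0) x, congrFun (pd_neg f 1) x]
  ring

/-- every point of the sphere of radius r > 0 is `σc r θ` for some `θ ∈ [-π, π]` -/
lemma sphere_eq_σc {r : ℝ} (hr : 0 < r) {z : E2} (hz : z ∈ sphere (0:E2) r) :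
    ∃ θ ∈ Set.Icc (-π) π, z = σc r θ := by
  rw [mem_sphere, dist_zero_right] at hz
  set w : ℂ := ⟨z 0, z 1⟩ with hw
  have habs : ‖w‖ = r := by
    rw [Complex.norm_def, Complex.normSq_mk]
    rw [EuclideanSpace.norm_eq, Fin.sum_univ_two] at hz
    simp only [Real.norm_eq_abs, sq_abs] at hz
    rw [show z 0 * z 0 + z 1 * z 1 = z 0 ^2 + z 1 ^2 by ring]
    exact hz
  set θ := Complex.arg w with hθ
  refine ⟨θ, ⟨(Complex.neg_pi_lt_arg w).le, Complex.arg_le_pi w⟩, ?_⟩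
  have hrep := Complex.norm_mul_cos_add_sin_mul_I w
  rw [habs] at hrep
  have hre : r * Real.cos θ = z 0 := by
    have := congrArg Complex.re hrep
    simp at this; rw [Complex.cos_ofReal_re] at this; exact this
  have him : r * Real.sin θ = z 1 := by
    have := congrArg Complex.im hrep
    simp at this; rw [Complex.sin_ofReal_re] at this; exact this
  ext j
  fin_cases j
  · rw [show (⟨0, by norm_num⟩ : Fin 2) = 0 from rfl, σc_apply0]; exact hre.symm
  · rw [show (⟨1, by norm_num⟩ : Fin 2) = 1 from rfl, σc_apply1]; exact him.symm

open scoped ENNReal in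
/-- dyadic annular tails of a finite integral tend to zero -/
lemma tail_tendsto_zero {G : E2 → ℝ} (hGc : Continuous G) (hGnn : ∀ x, 0 ≤ G x)
    (hfin : ∫⁻ x : E2, ENNReal.ofReal (G x) < ⊤) :
    Filter.Tendsto
      (fun n : ℕ => ∫ x in (ball (0:E2) (2*2^n) \ closedBall 0 (2^n)), G x)
      Filter.atTop (nhds 0) := by
  set A : ℕ → Set E2 := fun n => ball (0:E2) (2*2^n) \ closedBall 0 (2^n) with hA
  have hmeas : ∀ n, MeasurableSet (A n) :=
    fun n => measurableSet_ball.diff measurableSet_closedBall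
  set J : ℕ → ℝ≥0∞ := fun n => ∫⁻ x in A n, ENNReal.ofReal (G x) with hJ
  have hkey : ∀ n m : ℕ, n < m → Disjoint (A n) (A m) := by
    intro n m h
    apply Set.disjoint_left.mpr
    rintro x ⟨hx1, hx2⟩ ⟨hy1, hy2⟩
    rw [mem_ball, dist_zero_right] at hx1
    rw [mem_closedBall, dist_zero_right, not_le] at hy2
    have h2 : (2:ℝ) * 2^n ≤ 2^m := by
      rw [show (2:ℝ) * 2^n = 2^(n+1) by ring]
      apply pow_le_pow_right₀ one_le_two
      omega
    linarith
  have hdisj : Pairwise (Function.onFun Disjoint A) := by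
    intro n m hnm
    rcases lt_or_gt_of_ne hnm with h | h
    · exact hkey n m h
    · exact (hkey m n h).symm
  have hsum : ∑' n, J n ≠ ⊤ := by
    rw [hJ]
    have := MeasureTheory.lintegral_iUnion (μ := volume) hmeas hdisj
      (fun x => ENNReal.ofReal (G x))
    rw [← this]
    exact (lt_of_le_of_lt (MeasureTheory.setLIntegral_le_lintegral _ _) hfin).ne
  have hJ0 : Filter.Tendsto J Filter.atTop (nhds 0) :=
    ENNReal.tendsto_atTop_zero_of_tsum_ne_top hsum
  have hJfin : ∀ n, J n ≠ ⊤ := ENNReal.ne_top_of_tsum_ne_top hsum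
  have heq : ∀ n, (∫ x in A n, G x) = (J n).toReal := by
    intro n
    rw [hJ]
    rw [MeasureTheory.integral_eq_lintegral_of_nonneg_ae
      (Filter.Eventually.of_forall (fun x => hGnn x))
      (hGc.aestronglyMeasurable)]
  rw [show (fun n : ℕ => ∫ x in (ball (0:E2) (2*2^n) \ closedBall 0 (2^n)), G x) = fun n => (J n).toReal from funext heq]
  have := (ENNReal.tendsto_toReal (ENNReal.zero_ne_top)).comp hJ0
  exact this
end

/-- A solution of the drift-diffusion equation `-Δψ + u·∇ψ = 0` on `ℝ²` with
square-integrable gradient is constant. -/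
theorem drift_diffusion_liouville (u : E2 → E2) (ψ : E2 → ℝ)
    (hu : ContDiff ℝ (⊤ : ℕ∞) u) (hψ : ContDiff ℝ (⊤ : ℕ∞) ψ)
    (heq : ∀ x : E2, -(lap ψ x) + advect u ψ x = 0)
    (hdir : ∫⁻ x : E2, ENNReal.ofReal (gradSq ψ x) < ⊤) :
    ∃ a : ℝ, ∀ x : E2, ψ x = a := by
  refine ⟨ψ 0, fun x => ?_⟩
  have hGc : Continuous (gradSq ψ) := by
    have h0 := (contDiff_pd hψ 0).continuous
    have h1 := (contDiff_pd hψ 1).continuous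
    have hrw : gradSq ψ = fun y => (pd ψ 0 y)^2 + (pd ψ 1 y)^2 := rfl
    rw [hrw]; fun_prop
  have hGnn : ∀ y, 0 ≤ gradSq ψ y := fun y => by simp only [gradSq]; positivity
  have htail := tail_tendsto_zero hGc hGnn hdir
  have hu0 : Continuous fun y => u y 0 := by
    have := hu.continuous
    fun_prop
  have hψneg : ContDiff ℝ (⊤:ℕ∞) (fun y => -(ψ y)) := hψ.neg
  have heqneg : ∀ y : E2, -(lap (fun z => -(ψ z)) y) + advect u (fun z => -(ψ z)) y = 0 := by
    intro y
    rw [lap_neg, advect_neg]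
    linarith [heq y]
  have hπ := Real.pi_pos
  -- enough to show |ψ x - ψ 0| ≤ ε for all ε > 0
  have key : ∀ ε > (0:ℝ), |ψ x - ψ 0| ≤ ε := by
    intro ε hε
    -- choose a good dyadic scale
    have h1 : ∀ᶠ n : ℕ in Filter.atTop,
        (∫ y in (ball (0:E2) (2*2^n) \ closedBall 0 (2^n)), gradSq ψ y)
          < ε^2/(16*π+1) := htail.eventually_lt_const (by positivity)
    have h2 : ∀ᶠ n : ℕ in Filter.atTop, ‖x‖ ≤ (2:ℝ)^n :=
      (tendsto_pow_atTop_atTop_of_one_lt (by norm_num : (1:ℝ) < 2)).eventually_ge_atTop ‖x‖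
    obtain ⟨n, hn1, hn2⟩ := (h1.and h2).exists
    set R : ℝ := (2:ℝ)^n with hR_def
    have hR : 0 < R := by positivity
    set In : ℝ := ∫ y in (ball (0:E2) (2*R) \ closedBall 0 R), gradSq ψ y with hIn_def
    have hInnn : 0 ≤ In :=
      setIntegral_nonneg (measurableSet_ball.diff measurableSet_closedBall)
        (fun y _ => hGnn y)
    obtain ⟨r, hrmem, hrsel⟩ := exists_good_radius hGc hGnn hR
    have hrpos : 0 < r := lt_trans hR hrmem.1
    have hsne : (sphere (0:E2) r).Nonempty := NormedSpace.sphere_nonempty.mpr hrpos.le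
    obtain ⟨p, hpmem, hpmax⟩ := (isCompact_sphere (0:E2) r).exists_isMaxOn hsne
      hψ.continuous.continuousOn
    obtain ⟨q, hqmem, hqmin⟩ := (isCompact_sphere (0:E2) r).exists_isMinOn hsne
      hψ.continuous.continuousOn
    have hxmem : x ∈ closedBall (0:E2) r := by
      rw [mem_closedBall, dist_zero_right]
      exact le_trans hn2 hrmem.1.le
    have h0mem : (0:E2) ∈ closedBall (0:E2) r := mem_closedBall_self hrpos.le
    -- maximum principle bounds
    have hx_le : ψ x ≤ ψ p := wmp u ψ hu0 hψ heq hrpos hxmem hpmax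
    have h0_le : ψ 0 ≤ ψ p := wmp u ψ hu0 hψ heq hrpos h0mem hpmax
    have hqmax' : IsMaxOn (fun y => -(ψ y)) (sphere (0:E2) r) q := by
      intro y hy
      simp only [Set.mem_setOf_eq]
      exact neg_le_neg (hqmin hy)
    have hx_ge : ψ q ≤ ψ x := by
      have := wmp u (fun y => -(ψ y)) hu0 hψneg heqneg hrpos hxmem hqmax'
      simpa using this
    have h0_ge : ψ q ≤ ψ 0 := by
      have := wmp u (fun y => -(ψ y)) hu0 hψneg heqneg hrpos h0mem hqmax'
      simpa using this
    -- oscillation bound on the circle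
    obtain ⟨θp, hθp, hpeq⟩ := sphere_eq_σc hrpos hpmem
    obtain ⟨θq, hθq, hqeq⟩ := sphere_eq_σc hrpos hqmem
    have hosc : (ψ p - ψ q)^2 ≤ (2*π) * ∫ θ in Set.Ioo (-π) π, r^2 * gradSq ψ (σc r θ) := by
      rcases le_total θq θp with hle | hle
      · have := osc_sq_le hψ hrpos hθq.1 hle hθp.2
        rwa [← hpeq, ← hqeq] at this
      · have := osc_sq_le hψ hrpos hθp.1 hle hθq.2
        rw [← hpeq, ← hqeq] at this
        rwa [show (ψ q - ψ p)^2 = (ψ p - ψ q)^2 by ring] at this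
    have hgid : (∫ θ in Set.Ioo (-π) π, r^2 * gradSq ψ (σc r θ))
        = r^2 * ∫ θ in Set.Ioo (-π) π, gradSq ψ (σc r θ) :=
      MeasureTheory.integral_const_mul _ _
    set gr : ℝ := ∫ θ in Set.Ioo (-π) π, gradSq ψ (σc r θ) with hgr_def
    have hgrnn : 0 ≤ gr := setIntegral_nonneg measurableSet_Ioo (fun θ _ => hGnn _)
    have hrsq : r^2 ≤ 4*R^2 := by nlinarith [hrmem.1, hrmem.2, hrpos, hR]
    -- combine
    have hsel2 : gr ≤ 2 * In / R^2 := by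
      rw [le_div_iff₀ (by positivity)]
      linarith [hrsel]
    have hfinal : (ψ p - ψ q)^2 ≤ 16 * π * In := by
      have hb1 : (2*π) * (r^2 * gr) ≤ (2*π) * ((4*R^2) * (2 * In / R^2)) := by
        apply mul_le_mul_of_nonneg_left _ (by positivity)
        calc r^2 * gr ≤ (4*R^2) * gr := mul_le_mul_of_nonneg_right hrsq hgrnn
          _ ≤ (4*R^2) * (2 * In / R^2) :=
            mul_le_mul_of_nonneg_left hsel2 (by positivity)
      have hb2 : (2*π) * ((4*R^2) * (2 * In / R^2)) = 16 * π * In := by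
        field_simp
        ring
      rw [hgid] at hosc
      linarith [hosc, hb1]
    have hpq_nn : 0 ≤ ψ p - ψ q := by linarith [hqmin hpmem]
    have hlt : 16 * π * In < ε^2 := by
      have hq1 : 16 * π * In ≤ 16*π * (ε^2/(16*π+1)) := by
        apply mul_le_mul_of_nonneg_left hn1.le (by positivity)
      have hq2 : 16*π * (ε^2/(16*π+1)) < ε^2 := by
        rw [div_eq_inv_mul, ← mul_assoc]
        have h3 : 16*π * (16*π+1)⁻¹ < 1 := by
          rw [mul_inv_lt_iff₀ (by positivity)]
          linarith
        have h4 := mul_lt_mul_of_pos_right h3 (pow_pos hε 2)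
        linarith
      linarith
    have hpq : ψ p - ψ q ≤ ε := by nlinarith [hfinal, hlt, hpq_nn, hε]
    rw [abs_le]
    constructor <;> linarith
  have habs : |ψ x - ψ 0| ≤ 0 := by
    apply le_of_forall_pos_le_add
    intro ε hε
    simpa using key ε hε
  have := le_antisymm habs (abs_nonneg _)
  rw [abs_eq_zero] at this
  linarith [this]
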